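/- Let g : ℝᵈ → ℝ satisfy g(h) = ½ hᵀIh + r(h) where I is symmetric positive definite and r(h) = o(‖h‖²) as h → 0. Let A be symmetric positive definite. Then as δ → 0, inf over {h : hᵀAh = δ²} of g(h) = ½ δ² λ_min(A^{-1/2}IA^{-1/2}) + o(δ²). -/

import Mathlib

open Matrix Filter Asymptotics MeasureTheory
open scoped Topology

noncomputable def minEig {d : ℕ} (M : Matrix (Fin d) (Fin d) ℝ) : ℝ := sInf (spectrum ℝ M)

open Classical in
noncomputable def sqrtInv {d : ℕ} (A : Matrix (Fin d) (Fin d) ℝ) : Matrix (Fin d) (Fin d) ℝ :=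
  if h : A.PosSemidef then ((h.1.eigenvectorUnitary : Matrix (Fin d) (Fin d) ℝ) *
    diagonal (fun i => Real.sqrt (h.1.eigenvalues i)) *
    (star h.1.eigenvectorUnitary : Matrix (Fin d) (Fin d) ℝ))⁻¹ else 0

noncomputable def quadForm {d : ℕ} (M : Matrix (Fin d) (Fin d) ℝ) (v : EuclideanSpace ℝ (Fin d)) : ℝ :=
  (inner ℝ v (Matrix.toEuclideanLin M v) : ℝ)

section helpers
variable {d : ℕ}

lemma toEuclideanLin_mul' (M N : Matrix (Fin d) (Fin d) ℝ) (v : EuclideanSpace ℝ (Fin d)) :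
    Matrix.toEuclideanLin (M * N) v = Matrix.toEuclideanLin M (Matrix.toEuclideanLin N v) := by
  simp [Matrix.toEuclideanLin_apply, Matrix.mulVec_mulVec]

lemma toEuclideanLin_one' (v : EuclideanSpace ℝ (Fin d)) :
    Matrix.toEuclideanLin (1 : Matrix (Fin d) (Fin d) ℝ) v = v := by
  simp [Matrix.toEuclideanLin_apply, Matrix.one_mulVec]

lemma key_spectrum {M : Matrix (Fin d) (Fin d) ℝ} (hM : M.IsHermitian)
    (hn : Module.finrank ℝ (EuclideanSpace ℝ (Fin d)) = d) :
    spectrum ℝ M = Set.range ((Matrix.isHermitian_iff_isSymmetric.1 hM).eigenvalues hn) := by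
  have hT := Matrix.isHermitian_iff_isSymmetric.1 hM
  ext x
  constructor
  · intro hx
    rw [← Matrix.spectrum_toEuclideanLin (A := M) (𝕜 := ℝ)] at hx
    have hev : Module.End.HasEigenvalue (Matrix.toEuclideanLin M) x :=
      Module.End.hasEigenvalue_iff_mem_spectrum.2 hx
    obtain ⟨v, hv⟩ := hev.exists_hasEigenvector
    have happ : Matrix.toEuclideanLin M v = x • v := hv.apply_eq_smul
    have hrepr : (hT.eigenvectorBasis hn).repr v ≠ 0 := by
      simpa using hv.2
    obtain ⟨i, hi⟩ := (by by_contra hc; push_neg at hc; exact hrepr (PiLp.ext hc) :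
      ∃ i, (hT.eigenvectorBasis hn).repr v i ≠ 0)
    refine ⟨i, ?_⟩
    have h2 := hT.eigenvectorBasis_apply_self_apply hn v i
    rw [happ, _root_.map_smul] at h2
    simp only [PiLp.smul_apply, smul_eq_mul] at h2
    exact mul_right_cancel₀ (by simpa using hi) h2.symm
  · rintro ⟨i, rfl⟩
    rw [← Matrix.spectrum_toEuclideanLin (A := M) (𝕜 := ℝ)]
    exact (hT.hasEigenvalue_eigenvalues hn i).mem_spectrum

lemma quadForm_ge {M : Matrix (Fin d) (Fin d) ℝ} (hM : M.IsHermitian)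
    (v : EuclideanSpace ℝ (Fin d)) :
    minEig M * ‖v‖ ^ 2 ≤ quadForm M v := by
  have hn : Module.finrank ℝ (EuclideanSpace ℝ (Fin d)) = d := by simp
  have hT := Matrix.isHermitian_iff_isSymmetric.1 hM
  set b := hT.eigenvectorBasis hn with hb
  set ev := hT.eigenvalues hn with hev
  have hle : ∀ i, minEig M ≤ ev i := fun i => by
    rw [minEig, key_spectrum hM hn]
    exact csInf_le (Set.finite_range _).bddBelow ⟨i, rfl⟩
  have hkey : ∀ w u : EuclideanSpace ℝ (Fin d), (inner ℝ w u : ℝ) = ∑ i, (b.repr w i) * (b.repr u i) := by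
    intro w u
    rw [← b.sum_inner_mul_inner w u]
    refine Finset.sum_congr rfl fun i _ => ?_
    rw [b.repr_apply_apply, b.repr_apply_apply, real_inner_comm w]
  have h1 : quadForm M v = ∑ i, (b.repr v i) * (b.repr (Matrix.toEuclideanLin M v) i) := by
    rw [quadForm, hkey]
  have h2 : ∀ i, b.repr (Matrix.toEuclideanLin M v) i = ev i * b.repr v i :=
    fun i => hT.eigenvectorBasis_apply_self_apply hn v i
  have h3 : ‖v‖ ^ 2 = ∑ i, (b.repr v i) ^ 2 := by
    rw [← real_inner_self_eq_norm_sq, hkey]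
    refine Finset.sum_congr rfl fun i _ => (sq _).symm
  calc minEig M * ‖v‖ ^ 2 = ∑ i, minEig M * (b.repr v i) ^ 2 := by rw [h3, Finset.mul_sum]
    _ ≤ ∑ i, ev i * (b.repr v i) ^ 2 :=
        Finset.sum_le_sum fun i _ => mul_le_mul_of_nonneg_right (hle i) (sq_nonneg _)
    _ = quadForm M v := by
        rw [h1]
        exact Finset.sum_congr rfl fun i _ => by rw [h2 i]; ring

lemma exists_min_eigvec (hd : 0 < d) {M : Matrix (Fin d) (Fin d) ℝ} (hM : M.IsHermitian) :
    ∃ v : EuclideanSpace ℝ (Fin d), ‖v‖ = 1 ∧ Matrix.toEuclideanLin M v = minEig M • v := by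
  have hn : Module.finrank ℝ (EuclideanSpace ℝ (Fin d)) = d := by simp
  have hT := Matrix.isHermitian_iff_isSymmetric.1 hM
  haveI : Nonempty (Fin d) := Fin.pos_iff_nonempty.1 hd
  have hmem : minEig M ∈ Set.range (hT.eigenvalues hn) := by
    rw [minEig, key_spectrum hM hn]
    exact (Set.range_nonempty _).csInf_mem (Set.finite_range _)
  obtain ⟨i, hi⟩ := hmem
  refine ⟨hT.eigenvectorBasis hn i, (hT.eigenvectorBasis hn).orthonormal.1 i, ?_⟩
  rw [hT.apply_eigenvectorBasis hn i, hi]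
  norm_num

end helpers

set_option maxHeartbeats 1000000 in
set_option synthInstance.maxHeartbeats 200000 in
/-- Asymptotic form of the δ-worth: quadratic minimisation with o(‖h‖²) remainder. -/
theorem stmt_6 {d : ℕ} (A I : Matrix (Fin d) (Fin d) ℝ) (hA : A.PosDef) (hI : I.PosDef)
    (g r : EuclideanSpace ℝ (Fin d) → ℝ)
    (hg : ∀ h, g h = (1 / 2) * quadForm I h + r h)
    (hr : r =o[nhds 0] fun h => ‖h‖ ^ 2) :
    (fun δ : ℝ => sInf {x : ℝ | ∃ h, quadForm A h = δ ^ 2 ∧ x = g h}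
        - (1 / 2) * δ ^ 2 * minEig (sqrtInv A * I * sqrtInv A))
      =o[nhdsWithin 0 (Set.Ioi 0)] fun δ => δ ^ 2 := by
  classical
  have hAsd := hA.posSemidef
  set S := (hAsd.1.eigenvectorUnitary : Matrix (Fin d) (Fin d) ℝ) *
    diagonal (fun i => Real.sqrt (hAsd.1.eigenvalues i)) *
    (star hAsd.1.eigenvectorUnitary : Matrix (Fin d) (Fin d) ℝ) with hSdef
  have hS : S.IsHermitian := by
    rw [Matrix.IsHermitian, hSdef, Matrix.conjTranspose_mul, Matrix.conjTranspose_mul,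
      Matrix.star_eq_conjTranspose, Matrix.conjTranspose_conjTranspose,
      Matrix.diagonal_conjTranspose, Matrix.mul_assoc]
    simp [Matrix.star_eq_conjTranspose]
  have hSS : S * S = A := by
    have hUU : (star hAsd.1.eigenvectorUnitary : Matrix (Fin d) (Fin d) ℝ) *
        (hAsd.1.eigenvectorUnitary : Matrix (Fin d) (Fin d) ℝ) = 1 :=
      Unitary.coe_star_mul_self _
    have hDD : diagonal (fun i => Real.sqrt (hAsd.1.eigenvalues i)) *
        diagonal (fun i => Real.sqrt (hAsd.1.eigenvalues i)) =
        diagonal (RCLike.ofReal ∘ hAsd.1.eigenvalues) := by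
      rw [Matrix.diagonal_mul_diagonal]
      congr 1
      funext i
      simp [Real.mul_self_sqrt (hAsd.eigenvalues_nonneg i)]
    calc S * S = (hAsd.1.eigenvectorUnitary : Matrix (Fin d) (Fin d) ℝ) *
          (diagonal (fun i => Real.sqrt (hAsd.1.eigenvalues i)) *
          ((star hAsd.1.eigenvectorUnitary : Matrix (Fin d) (Fin d) ℝ) *
          (hAsd.1.eigenvectorUnitary : Matrix (Fin d) (Fin d) ℝ)) *
          diagonal (fun i => Real.sqrt (hAsd.1.eigenvalues i))) *
          (star hAsd.1.eigenvectorUnitary : Matrix (Fin d) (Fin d) ℝ) := by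
            simp only [hSdef, Matrix.mul_assoc]
      _ = A := by
        rw [hUU, Matrix.mul_one, hDD]
        conv_rhs => rw [hAsd.1.spectral_theorem]
        rfl
  have hdet : IsUnit S.det := by
    rw [isUnit_iff_ne_zero]
    intro h0
    have : A.det = 0 := by rw [← hSS, Matrix.det_mul, h0, mul_zero]
    exact hA.det_pos.ne' this
  set B := S⁻¹ with hBdef
  have hBS : B * S = 1 := Matrix.nonsing_inv_mul _ hdet
  have hSB : S * B = 1 := Matrix.mul_nonsing_inv _ hdet
  have hB : B.IsHermitian := hS.inv
  have hsqrtInv : sqrtInv A = B := by rw [sqrtInv, dif_pos hAsd]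
  simp only [hsqrtInv]
  have hM : (B * I * B).IsHermitian := by
    have := Matrix.isHermitian_mul_mul_conjTranspose B hI.isHermitian
    rwa [hB.eq] at this
  have hTS := Matrix.isHermitian_iff_isSymmetric.1 hS
  have hTB := Matrix.isHermitian_iff_isSymmetric.1 hB
  have hBS' : ∀ u : EuclideanSpace ℝ (Fin d),
      Matrix.toEuclideanLin B (Matrix.toEuclideanLin S u) = u := fun u => by
    rw [← toEuclideanLin_mul', hBS, toEuclideanLin_one']
  have hSB' : ∀ u : EuclideanSpace ℝ (Fin d),
      Matrix.toEuclideanLin S (Matrix.toEuclideanLin B u) = u := fun u => by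
    rw [← toEuclideanLin_mul', hSB, toEuclideanLin_one']
  have hquadA : ∀ h : EuclideanSpace ℝ (Fin d),
      quadForm A h = ‖Matrix.toEuclideanLin S h‖ ^ 2 := fun h => by
    rw [quadForm, ← hSS, toEuclideanLin_mul', ← hTS h (Matrix.toEuclideanLin S h),
      real_inner_self_eq_norm_sq]
  have hquadM : ∀ u : EuclideanSpace ℝ (Fin d),
      quadForm (B * I * B) u = quadForm I (Matrix.toEuclideanLin B u) := fun u => by
    rw [quadForm, quadForm, toEuclideanLin_mul', toEuclideanLin_mul',
      ← hTB u (Matrix.toEuclideanLin I (Matrix.toEuclideanLin B u))]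
  set Tc := LinearMap.toContinuousLinearMap (Matrix.toEuclideanLin B) with hTc
  set C := ‖Tc‖ with hCdef
  have hC0 : (0:ℝ) ≤ C := norm_nonneg _
  have hCb : ∀ u : EuclideanSpace ℝ (Fin d), ‖Matrix.toEuclideanLin B u‖ ≤ C * ‖u‖ := fun u => by
    have h1 := Tc.le_opNorm u
    have h2 : Tc u = Matrix.toEuclideanLin B u :=
      congrFun (LinearMap.coe_toContinuousLinearMap' (Matrix.toEuclideanLin B)) u
    rwa [h2] at h1
  set lam := minEig (B * I * B) with hlam
  rcases Nat.eq_zero_or_pos d with hd | hd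
  · -- degenerate case d = 0
    subst hd
    haveI : Subsingleton (Matrix (Fin 0) (Fin 0) ℝ) := by
      constructor; intro a b; ext i j; exact absurd i.2 (by omega)
    have hlam0 : lam = 0 := by
      have : spectrum ℝ (B * I * B) = ∅ := by
        ext x
        simp [spectrum.mem_iff, isUnit_of_subsingleton]
      rw [hlam, minEig, this, Real.sInf_empty]
    have hf : ∀ δ ∈ Set.Ioi (0:ℝ),
        sInf {x : ℝ | ∃ h, quadForm A h = δ ^ 2 ∧ x = g h}
          - (1 / 2) * δ ^ 2 * lam = 0 := by
      intro δ hδ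
      have hempty : {x : ℝ | ∃ h, quadForm A h = δ ^ 2 ∧ x = g h} = ∅ := by
        ext x
        simp only [Set.mem_setOf_eq, Set.mem_empty_iff_false, iff_false]
        rintro ⟨h, hh, -⟩
        have h0 : h = 0 := Subsingleton.elim _ _
        rw [h0] at hh
        simp [quadForm] at hh
        have h3 : (0:ℝ) < δ := hδ
        exact absurd hh.symm (by positivity)
      rw [hempty, Real.sInf_empty, hlam0]
      ring
    refine (Filter.EventuallyEq.trans_isLittleO ?_ (isLittleO_zero _ _))
    filter_upwards [self_mem_nhdsWithin] with δ hδ using hf δ hδ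
  · -- main case
    obtain ⟨v, hv1, hveig⟩ := exists_min_eigvec hd hM
    rw [isLittleO_iff]
    intro ε hε
    have hC1 : (0:ℝ) < C ^ 2 + 1 := by positivity
    set ε' := ε / (C ^ 2 + 1) with hε'def
    have hε'pos : 0 < ε' := div_pos hε hC1
    have hε'mul : ε' * (C ^ 2 + 1) = ε := div_mul_cancel₀ ε hC1.ne'
    rw [isLittleO_iff] at hr
    have h0 := hr hε'pos
    rw [Metric.eventually_nhds_iff] at h0
    obtain ⟨η, hη, hrb⟩ := h0
    have hrb' : ∀ h : EuclideanSpace ℝ (Fin d), ‖h‖ < η → |r h| ≤ ε' * ‖h‖ ^ 2 := by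
      intro h hh
      have := hrb (y := h) (by simpa [dist_zero_right] using hh)
      simpa [Real.norm_eq_abs, abs_of_nonneg (sq_nonneg ‖h‖)] using this
    rw [eventually_nhdsWithin_iff, Metric.eventually_nhds_iff]
    refine ⟨η / (C + 1), by positivity, ?_⟩
    intro δ hδd hδmem
    have hδpos : 0 < δ := hδmem
    have hδlt : δ < η / (C + 1) := by
      rwa [Real.dist_eq, sub_zero, abs_of_pos hδpos] at hδd
    have hCδ : C * δ < η := by
      have h1 : (C + 1) * δ < (C + 1) * (η / (C + 1)) :=
        mul_lt_mul_of_pos_left hδlt (by positivity)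
      rw [mul_div_cancel₀ _ (by positivity : (C:ℝ) + 1 ≠ 0)] at h1
      nlinarith
    -- analysis of an arbitrary member of the constraint set
    have hmemb : ∀ h : EuclideanSpace ℝ (Fin d), quadForm A h = δ ^ 2 →
        (1 / 2) * δ ^ 2 * lam - ε' * C ^ 2 * δ ^ 2 ≤ g h := by
      intro h hh
      set u := Matrix.toEuclideanLin S h with hu
      have hun : ‖u‖ = δ := by
        have := (hquadA h).symm.trans hh
        have h2 := congrArg Real.sqrt this
        rwa [Real.sqrt_sq (norm_nonneg _), Real.sqrt_sq hδpos.le] at h2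
      have hhu : h = Matrix.toEuclideanLin B u := (hBS' h).symm
      have hhn : ‖h‖ ≤ C * δ := by
        rw [hhu]; calc ‖Matrix.toEuclideanLin B u‖ ≤ C * ‖u‖ := hCb u
          _ = C * δ := by rw [hun]
      have hrh : |r h| ≤ ε' * C ^ 2 * δ ^ 2 := by
        calc |r h| ≤ ε' * ‖h‖ ^ 2 := hrb' h (lt_of_le_of_lt hhn hCδ)
          _ ≤ ε' * (C * δ) ^ 2 := by
              have : ‖h‖ ^ 2 ≤ (C * δ) ^ 2 := by nlinarith [norm_nonneg h]
              nlinarith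
          _ = ε' * C ^ 2 * δ ^ 2 := by ring
      have hqI : lam * δ ^ 2 ≤ quadForm I h := by
        have := quadForm_ge hM u
        rw [hquadM u, ← hhu, hun] at this
        exact this
      rw [hg h]
      have := abs_le.1 hrh
      nlinarith [this.1]
    -- the distinguished member
    set u₀ : EuclideanSpace ℝ (Fin d) := δ • v with hu₀
    set h₀ := Matrix.toEuclideanLin B u₀ with hh₀
    have hu₀n : ‖u₀‖ = δ := by
      rw [hu₀, norm_smul, hv1, Real.norm_eq_abs, abs_of_pos hδpos, mul_one]
    have hqA0 : quadForm A h₀ = δ ^ 2 := by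
      rw [hquadA, hh₀, hSB' u₀, hu₀n]
    have hqI0 : quadForm I h₀ = lam * δ ^ 2 := by
      rw [← hquadM u₀]
      rw [quadForm, hu₀, _root_.map_smul, hveig, real_inner_smul_left, real_inner_smul_right,
        real_inner_smul_right, real_inner_self_eq_norm_sq, hv1]
      ring
    have hh₀n : ‖h₀‖ ≤ C * δ := by
      rw [hh₀]; calc ‖Matrix.toEuclideanLin B u₀‖ ≤ C * ‖u₀‖ := hCb u₀
        _ = C * δ := by rw [hu₀n]
    have hrh₀ : |r h₀| ≤ ε' * C ^ 2 * δ ^ 2 := by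
      calc |r h₀| ≤ ε' * ‖h₀‖ ^ 2 := hrb' h₀ (lt_of_le_of_lt hh₀n hCδ)
        _ ≤ ε' * (C * δ) ^ 2 := by
            have : ‖h₀‖ ^ 2 ≤ (C * δ) ^ 2 := by nlinarith [norm_nonneg h₀]
            nlinarith
        _ = ε' * C ^ 2 * δ ^ 2 := by ring
    set Sδ := {x : ℝ | ∃ h, quadForm A h = δ ^ 2 ∧ x = g h} with hSδ
    have hmem0 : g h₀ ∈ Sδ := ⟨h₀, hqA0, rfl⟩
    have hne : Sδ.Nonempty := ⟨g h₀, hmem0⟩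
    have hLB : ∀ x ∈ Sδ, (1 / 2) * δ ^ 2 * lam - ε' * C ^ 2 * δ ^ 2 ≤ x := by
      rintro x ⟨h, hh, rfl⟩
      exact hmemb h hh
    have hbdd : BddBelow Sδ := ⟨_, hLB⟩
    have hinf_le : sInf Sδ ≤ g h₀ := csInf_le hbdd hmem0
    have hle_inf : (1 / 2) * δ ^ 2 * lam - ε' * C ^ 2 * δ ^ 2 ≤ sInf Sδ := le_csInf hne hLB
    have hgh₀ : g h₀ ≤ (1 / 2) * δ ^ 2 * lam + ε' * C ^ 2 * δ ^ 2 := by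
      rw [hg h₀, hqI0]
      have := (abs_le.1 hrh₀).2
      nlinarith
    rw [Real.norm_eq_abs, Real.norm_eq_abs, abs_of_nonneg (sq_nonneg δ), abs_le]
    constructor <;> nlinarith [sq_nonneg δ, sq_nonneg C, mul_pos hε'pos (mul_pos hδpos hδpos)]
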